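/- Assume ∫_{−∞}^∞ q(t) dt = ∞, d₀ := sup_{x∈ℝ} d(x) < ∞, and that there exist α ≥ 1, β > 0 and x₁ > 0 such that for all x with |x| ≥ x₁ and all t with |t − x| ≤ β one has 1/α ≤ d(t)/d(x) ≤ α. Then for every s ∈ (0,∞) there exists a constant c(s) > 0 such that for all x ∈ ℝ: ∫_x^∞ exp(−s ∫_x^t q(ξ) dξ) dt ≤ c(s) d(x). -/

import Mathlib

open MeasureTheory Filter Topology
open scoped ENNReal

/-- The function `d(x) = inf { d > 0 : ∫_{x-d}^{x+d} q = 2 }`. -/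
noncomputable def dq (q : ℝ → ℝ) (x : ℝ) : ℝ :=
  sInf {d : ℝ | 0 < d ∧ ∫ t in x - d..x + d, q t = 2}

noncomputable def Gq (q : ℝ → ℝ) (x : ℝ) : ℝ := ∫ t in (0:ℝ)..x, q t

lemma qII {q : ℝ → ℝ} (hqloc : LocallyIntegrable q volume) (a b : ℝ) :
    IntervalIntegrable q volume a b :=
  (hqloc.integrableOn_isCompact isCompact_uIcc).intervalIntegrable

lemma Gq_cont {q : ℝ → ℝ} (hqloc : LocallyIntegrable q volume) : Continuous (Gq q) :=
  intervalIntegral.continuous_primitive (fun a b => qII hqloc a b) 0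

lemma integral_eq_Gq {q : ℝ → ℝ} (hqloc : LocallyIntegrable q volume) (a b : ℝ) :
    ∫ t in a..b, q t = Gq q b - Gq q a := by
  rw [Gq, Gq, ← intervalIntegral.integral_interval_sub_left (qII hqloc 0 b) (qII hqloc 0 a)]

lemma Gq_mono {q : ℝ → ℝ} (hq : ∀ x, 0 ≤ q x) (hqloc : LocallyIntegrable q volume) :
    Monotone (Gq q) := by
  intro a b hab
  have h : 0 ≤ ∫ t in a..b, q t :=
    intervalIntegral.integral_nonneg hab (fun t _ => hq t)
  rw [integral_eq_Gq hqloc] at h; linarith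

lemma Gq_unbounded {q : ℝ → ℝ} (hq : ∀ x, 0 ≤ q x) (hqloc : LocallyIntegrable q volume)
    (hqint : ∫⁻ x : ℝ, ENNReal.ofReal (q x) = ⊤) (x M : ℝ) :
    ∃ d : ℝ, 0 < d ∧ M ≤ Gq q (x + d) - Gq q (x - d) := by
  by_contra h
  push_neg at h
  have hbd : ∀ n : ℕ, ∫⁻ t in Set.Ioc (x - n) (x + n), ENNReal.ofReal (q t) ≤ ENNReal.ofReal M := by
    intro n
    have hint : IntegrableOn q (Set.Ioc (x - n) (x + n)) volume :=
      (qII hqloc (x - n) (x + n)).1.mono_set (by intro t ht; exact ht)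
    rw [← MeasureTheory.ofReal_integral_eq_lintegral_ofReal hint
      (Filter.Eventually.of_forall fun t => hq t)]
    apply ENNReal.ofReal_le_ofReal
    have : ∫ t in Set.Ioc (x - n) (x + n), q t = ∫ t in (x - (n:ℝ))..(x + n), q t := by
      rw [intervalIntegral.integral_of_le (by linarith [Nat.cast_nonneg (α := ℝ) n])]
    rw [this, integral_eq_Gq hqloc]
    rcases Nat.eq_zero_or_pos n with h0 | hp
    · subst h0; simp only [Nat.cast_zero, add_zero, sub_zero, sub_self]
      have := h 1 one_pos; nlinarith [Gq_mono hq hqloc (show x - 1 ≤ x + 1 by linarith)]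
    · exact le_of_lt (h n (by exact_mod_cast hp))
  have hcover : (⋃ n : ℕ, Set.Ioc (x - n) (x + n)) = Set.univ := by
    ext t; simp only [Set.mem_iUnion, Set.mem_univ, iff_true, Set.mem_Ioc]
    obtain ⟨n, hn⟩ := exists_nat_gt (max (x - t) (t - x))
    exact ⟨n, by simp at hn; constructor <;> linarith [hn.1, hn.2]⟩
  have hdir : Directed (· ⊆ ·) (fun n : ℕ => Set.Ioc (x - n) (x + n)) := by
    intro m n
    have hm : (m:ℝ) ≤ ((max m n : ℕ) : ℝ) := by exact_mod_cast le_max_left m n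
    have hn : (n:ℝ) ≤ ((max m n : ℕ) : ℝ) := by exact_mod_cast le_max_right m n
    exact ⟨max m n, Set.Ioc_subset_Ioc (by linarith) (by linarith),
      Set.Ioc_subset_Ioc (by linarith) (by linarith)⟩
  have := setLIntegral_iUnion_of_directed (μ := volume) (fun t => ENNReal.ofReal (q t)) hdir
  rw [hcover, Measure.restrict_univ, hqint] at this
  have : (⊤ : ℝ≥0∞) ≤ ENNReal.ofReal M := this ▸ iSup_le hbd
  simp [top_le_iff] at this

lemma dq_spec {q : ℝ → ℝ} (hq : ∀ x, 0 ≤ q x) (hqloc : LocallyIntegrable q volume)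
    (hqint : ∫⁻ x : ℝ, ENNReal.ofReal (q x) = ⊤) (x : ℝ) :
    0 < dq q x ∧ Gq q (x + dq q x) - Gq q (x - dq q x) = 2 ∧
      ∀ d, 0 ≤ d → 2 ≤ Gq q (x + d) - Gq q (x - d) → dq q x ≤ d := by
  set f : ℝ → ℝ := fun d => Gq q (x + d) - Gq q (x - d) with hf
  have hfc : Continuous f :=
    ((Gq_cont hqloc).comp (continuous_const.add continuous_id)).sub
      ((Gq_cont hqloc).comp (continuous_const.sub continuous_id))
  have hfmono : Monotone f := by
    intro a b hab
    have h1 := Gq_mono hq hqloc (show x + a ≤ x + b by linarith)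
    have h2 := Gq_mono hq hqloc (show x - b ≤ x - a by linarith)
    show Gq q (x + a) - Gq q (x - a) ≤ Gq q (x + b) - Gq q (x - b)
    linarith
  set T : Set ℝ := {d : ℝ | 0 ≤ d ∧ 2 ≤ f d} with hT
  have hTclosed : IsClosed T := by
    have : T = Set.Ici 0 ∩ f ⁻¹' Set.Ici 2 := by ext d; simp [hT, Set.mem_Ici]
    rw [this]; exact isClosed_Ici.inter (isClosed_Ici.preimage hfc)
  have hTne : T.Nonempty := by
    obtain ⟨d, hd, hd2⟩ := Gq_unbounded hq hqloc hqint x 2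
    exact ⟨d, le_of_lt hd, hd2⟩
  have hTbdd : BddBelow T := ⟨0, fun d hd => hd.1⟩
  set m := sInf T with hm
  have hmT : m ∈ T := hTclosed.csInf_mem hTne hTbdd
  have hf0 : f 0 = 0 := by simp [hf]
  have hmpos : 0 < m := by
    rcases lt_or_eq_of_le hmT.1 with h | h
    · exact h
    · exfalso
      have h2 : (2:ℝ) ≤ f 0 := h ▸ hmT.2
      rw [hf0] at h2; linarith
  have hfm : f m = 2 := by
    by_contra hne
    have h2 : 2 < f m := lt_of_le_of_ne hmT.2 (Ne.symm hne)
    have hev : ∀ᶠ d in 𝓝 m, 2 < f d ∧ 0 < d :=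
      ((hfc.continuousAt.eventually (eventually_gt_nhds h2))).and (eventually_gt_nhds hmpos)
    obtain ⟨b, hbm, hb2, hb0⟩ := hev.exists_lt
    exact absurd (csInf_le hTbdd ⟨le_of_lt hb0, le_of_lt hb2⟩) (not_le.mpr hbm)
  have hdqm : dq q x = m := by
    have hmS : m ∈ {d : ℝ | 0 < d ∧ ∫ t in x - d..x + d, q t = 2} := by
      refine ⟨hmpos, ?_⟩
      rw [integral_eq_Gq hqloc]; exact hfm
    refine le_antisymm (csInf_le ⟨0, fun d hd => le_of_lt hd.1⟩ hmS)
      (le_csInf ⟨m, hmS⟩ fun d hd => csInf_le hTbdd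
        ⟨le_of_lt hd.1, by
          have h2 := hd.2; rw [integral_eq_Gq hqloc] at h2; exact h2.ge⟩)
  rw [hdqm]
  exact ⟨hmpos, hfm, fun d h1 h2 => csInf_le hTbdd ⟨h1, h2⟩⟩

lemma dq_pos {q : ℝ → ℝ} (hq : ∀ x, 0 ≤ q x) (hqloc : LocallyIntegrable q volume)
    (hqint : ∫⁻ x : ℝ, ENNReal.ofReal (q x) = ⊤) (x : ℝ) : 0 < dq q x :=
  (dq_spec hq hqloc hqint x).1

lemma mass2 {q : ℝ → ℝ} (hq : ∀ x, 0 ≤ q x) (hqloc : LocallyIntegrable q volume)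
    (hqint : ∫⁻ x : ℝ, ENNReal.ofReal (q x) = ⊤) (c r : ℝ) (hr : dq q c ≤ r) :
    2 ≤ Gq q (c + r) - Gq q (c - r) := by
  have h := (dq_spec hq hqloc hqint c).2.1
  have h1 := Gq_mono hq hqloc (show c + dq q c ≤ c + r by linarith)
  have h2 := Gq_mono hq hqloc (show c - r ≤ c - dq q c by linarith)
  linarith

lemma block {q : ℝ → ℝ} (hq : ∀ x, 0 ≤ q x) (hqloc : LocallyIntegrable q volume)
    (hqint : ∫⁻ x : ℝ, ENNReal.ofReal (q x) = ⊤) (x r : ℝ) (K : ℕ)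
    (hcent : ∀ k : ℕ, k < K → dq q (x + (2 * k + 1) * r) ≤ r) :
    ∀ k : ℕ, k ≤ K → 2 * k ≤ Gq q (x + 2 * k * r) - Gq q x := by
  intro k
  induction k with
  | zero => intro _; simp
  | succ n ih =>
    intro hnK
    have h1 := ih (by omega)
    have h2 := mass2 hq hqloc hqint (x + (2 * n + 1) * r) r (hcent n (by omega))
    have e1 : x + (2 * n + 1) * r + r = x + 2 * (n + 1 : ℕ) * r := by push_cast; ring
    have e2 : x + (2 * n + 1) * r - r = x + 2 * (n : ℕ) * r := by push_cast; ring
    rw [e1, e2] at h2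
    push_cast at h1 h2 ⊢
    linarith

lemma piece {q : ℝ → ℝ} (hq : ∀ x, 0 ≤ q x) (hqloc : LocallyIntegrable q volume)
    (s : ℝ) (hs : 0 < s) (x a b : ℝ) (k : ℕ) (hG : 2 * k ≤ Gq q a - Gq q x) :
    ∫⁻ t in Set.Ico a b, ENNReal.ofReal (Real.exp (-(s * (Gq q t - Gq q x)))) ≤
      ENNReal.ofReal (Real.exp (-(2 * s))) ^ k * ENNReal.ofReal (b - a) := by
  calc ∫⁻ t in Set.Ico a b, ENNReal.ofReal (Real.exp (-(s * (Gq q t - Gq q x))))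
      ≤ ∫⁻ _ in Set.Ico a b, ENNReal.ofReal (Real.exp (-(2 * s)) ^ k) := by
        apply setLIntegral_mono measurable_const
        intro t ht
        apply ENNReal.ofReal_le_ofReal
        rw [← Real.exp_nat_mul]
        apply Real.exp_le_exp.2
        have hm := Gq_mono hq hqloc ht.1
        have h2 : 2 * (k:ℝ) ≤ Gq q t - Gq q x := by linarith
        nlinarith
    _ = ENNReal.ofReal (Real.exp (-(2 * s))) ^ k * ENNReal.ofReal (b - a) := by
        rw [setLIntegral_const, Real.volume_Ico, ENNReal.ofReal_pow (Real.exp_nonneg _)]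

lemma Jglobal {q : ℝ → ℝ} (hq : ∀ x, 0 ≤ q x) (hqloc : LocallyIntegrable q volume)
    (hqint : ∫⁻ x : ℝ, ENNReal.ofReal (q x) = ⊤) (s : ℝ) (hs : 0 < s)
    (d₀ : ℝ) (hd₀pos : 0 < d₀) (hd₀ : ∀ y, dq q y ≤ d₀) (x : ℝ) :
    ∫⁻ t in Set.Ioi x, ENNReal.ofReal (Real.exp (-(s * (Gq q t - Gq q x)))) ≤
      ENNReal.ofReal (2 * d₀) * (1 - ENNReal.ofReal (Real.exp (-(2 * s))))⁻¹ := by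
  have hcov : Set.Ioi x ⊆ ⋃ k : ℕ, Set.Ico (x + 2 * k * d₀) (x + 2 * (k + 1 : ℕ) * d₀) := by
    intro t ht
    simp only [Set.mem_Ioi] at ht
    have htx : 0 ≤ (t - x) / (2 * d₀) := div_nonneg (by linarith) (by linarith)
    refine Set.mem_iUnion.2 ⟨⌊(t - x) / (2 * d₀)⌋₊, ?_, ?_⟩
    · have h := Nat.floor_le htx
      rw [le_div_iff₀ (by linarith)] at h
      push_cast; nlinarith
    · have h := Nat.lt_floor_add_one ((t - x) / (2 * d₀))
      rw [div_lt_iff₀ (by linarith)] at h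
      push_cast; nlinarith
  calc ∫⁻ t in Set.Ioi x, ENNReal.ofReal (Real.exp (-(s * (Gq q t - Gq q x))))
      ≤ ∑' k : ℕ, ∫⁻ t in Set.Ico (x + 2 * k * d₀) (x + 2 * (k + 1 : ℕ) * d₀),
          ENNReal.ofReal (Real.exp (-(s * (Gq q t - Gq q x)))) :=
        (lintegral_mono_set hcov).trans (lintegral_iUnion_le _ _)
    _ ≤ ∑' k : ℕ, ENNReal.ofReal (Real.exp (-(2 * s))) ^ k * ENNReal.ofReal (2 * d₀) := by
        apply ENNReal.tsum_le_tsum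
        intro k
        have hG := block hq hqloc hqint x d₀ k (fun j _ => hd₀ _) k le_rfl
        have := piece hq hqloc s hs x (x + 2 * k * d₀) (x + 2 * (k + 1 : ℕ) * d₀) k hG
        convert this using 3
        push_cast; ring
    _ = ENNReal.ofReal (2 * d₀) * (1 - ENNReal.ofReal (Real.exp (-(2 * s))))⁻¹ := by
        rw [ENNReal.tsum_mul_right, ENNReal.tsum_geometric, mul_comm]

lemma Jstep {q : ℝ → ℝ} (hq : ∀ x, 0 ≤ q x) (hqloc : LocallyIntegrable q volume)
    (hqint : ∫⁻ x : ℝ, ENNReal.ofReal (q x) = ⊤) (s : ℝ) (hs : 0 < s)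
    (x r : ℝ) (hr : 0 < r) (K : ℕ)
    (hcent : ∀ k : ℕ, k < K → dq q (x + (2 * k + 1) * r) ≤ r) :
    ∫⁻ t in Set.Ioi x, ENNReal.ofReal (Real.exp (-(s * (Gq q t - Gq q x)))) ≤
      ENNReal.ofReal (2 * r) * (1 - ENNReal.ofReal (Real.exp (-(2 * s))))⁻¹ +
      ENNReal.ofReal (Real.exp (-(2 * s))) ^ K *
        ∫⁻ t in Set.Ioi (x + 2 * K * r),
          ENNReal.ofReal (Real.exp (-(s * (Gq q t - Gq q (x + 2 * K * r))))) := by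
  set y := x + 2 * K * r with hy
  set E := ENNReal.ofReal (Real.exp (-(2 * s))) with hE
  have hcov : Set.Ioi x ⊆ (⋃ i : Fin K, Set.Ico (x + 2 * (i : ℕ) * r)
      (x + 2 * ((i : ℕ) + 1 : ℕ) * r)) ∪ ({y} ∪ Set.Ioi y) := by
    intro t ht
    simp only [Set.mem_Ioi] at ht
    rcases lt_trichotomy t y with h | h | h
    · left
      have htx : 0 ≤ (t - x) / (2 * r) := div_nonneg (by linarith) (by linarith)
      have hfl : ⌊(t - x) / (2 * r)⌋₊ < K := by
        apply Nat.floor_lt htx |>.2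
        rw [div_lt_iff₀ (by linarith)]
        rw [hy] at h; nlinarith
      refine Set.mem_iUnion.2 ⟨⟨⌊(t - x) / (2 * r)⌋₊, hfl⟩, ?_, ?_⟩
      · have h2 := Nat.floor_le htx
        rw [le_div_iff₀ (by linarith)] at h2
        push_cast; nlinarith
      · have h2 := Nat.lt_floor_add_one ((t - x) / (2 * r))
        rw [div_lt_iff₀ (by linarith)] at h2
        push_cast; nlinarith
    · right; left; exact h.symm ▸ rfl
    · right; right; exact h
  calc ∫⁻ t in Set.Ioi x, ENNReal.ofReal (Real.exp (-(s * (Gq q t - Gq q x))))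
      ≤ (∫⁻ t in ⋃ i : Fin K, Set.Ico (x + 2 * (i : ℕ) * r) (x + 2 * ((i : ℕ) + 1 : ℕ) * r),
          ENNReal.ofReal (Real.exp (-(s * (Gq q t - Gq q x))))) +
        ((∫⁻ t in {y}, ENNReal.ofReal (Real.exp (-(s * (Gq q t - Gq q x))))) +
         ∫⁻ t in Set.Ioi y, ENNReal.ofReal (Real.exp (-(s * (Gq q t - Gq q x))))) :=
      (lintegral_mono_set hcov).trans ((lintegral_union_le _ _ _).trans
        (add_le_add_right (lintegral_union_le _ _ _) _))
    _ ≤ ENNReal.ofReal (2 * r) * (1 - E)⁻¹ +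
        (0 + E ^ K * ∫⁻ t in Set.Ioi y,
          ENNReal.ofReal (Real.exp (-(s * (Gq q t - Gq q y))))) := by
      gcongr ?_ + (?_ + ?_)
      · -- finite union part
        calc (∫⁻ t in ⋃ i : Fin K, Set.Ico (x + 2 * (i : ℕ) * r) (x + 2 * ((i : ℕ) + 1 : ℕ) * r),
              ENNReal.ofReal (Real.exp (-(s * (Gq q t - Gq q x)))))
            ≤ ∑' i : Fin K, ∫⁻ t in Set.Ico (x + 2 * (i : ℕ) * r) (x + 2 * ((i : ℕ) + 1 : ℕ) * r),
              ENNReal.ofReal (Real.exp (-(s * (Gq q t - Gq q x)))) := lintegral_iUnion_le _ _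
          _ ≤ ∑' i : Fin K, E ^ (i : ℕ) * ENNReal.ofReal (2 * r) := by
              apply ENNReal.tsum_le_tsum
              intro i
              have hG := block hq hqloc hqint x r K hcent i (le_of_lt i.isLt)
              have := piece hq hqloc s hs x (x + 2 * (i : ℕ) * r)
                (x + 2 * ((i : ℕ) + 1 : ℕ) * r) i hG
              convert this using 3
              push_cast; ring
          _ = ∑ i ∈ Finset.range K, E ^ i * ENNReal.ofReal (2 * r) := by
              rw [tsum_fintype]
              exact Fin.sum_univ_eq_sum_range (fun i => E ^ i * ENNReal.ofReal (2 * r)) K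
          _ ≤ ∑' i : ℕ, E ^ i * ENNReal.ofReal (2 * r) := ENNReal.sum_le_tsum _
          _ = ENNReal.ofReal (2 * r) * (1 - E)⁻¹ := by
              rw [ENNReal.tsum_mul_right, ENNReal.tsum_geometric, mul_comm]
      · -- singleton
        rw [setLIntegral_measure_zero _ _ (measure_singleton y)]
      · -- tail
        have hGy := block hq hqloc hqint x r K hcent K le_rfl
        have hmeas : Measurable fun t : ℝ =>
            E ^ K * ENNReal.ofReal (Real.exp (-(s * (Gq q t - Gq q y)))) := by
          apply Measurable.const_mul
          exact (ENNReal.continuous_ofReal.comp (Real.continuous_exp.comp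
            (((continuous_const.mul ((Gq_cont hqloc).sub continuous_const))).neg))).measurable
        calc ∫⁻ t in Set.Ioi y, ENNReal.ofReal (Real.exp (-(s * (Gq q t - Gq q x))))
            ≤ ∫⁻ t in Set.Ioi y,
                E ^ K * ENNReal.ofReal (Real.exp (-(s * (Gq q t - Gq q y)))) := by
              apply setLIntegral_mono hmeas
              intro t _
              have hident : -(s * (Gq q t - Gq q x)) =
                  -(s * (Gq q y - Gq q x)) + -(s * (Gq q t - Gq q y)) := by ring
              rw [hident, Real.exp_add, ENNReal.ofReal_mul (Real.exp_nonneg _)]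
              gcongr
              rw [hE, ← ENNReal.ofReal_pow (Real.exp_nonneg _), ← Real.exp_nat_mul]
              apply ENNReal.ofReal_le_ofReal
              apply Real.exp_le_exp.2
              nlinarith
          _ = E ^ K * ∫⁻ t in Set.Ioi y,
                ENNReal.ofReal (Real.exp (-(s * (Gq q t - Gq q y)))) :=
              lintegral_const_mul' _ _ (ENNReal.pow_ne_top ENNReal.ofReal_ne_top)
    _ = ENNReal.ofReal (2 * r) * (1 - E)⁻¹ + E ^ K *
        ∫⁻ t in Set.Ioi y, ENNReal.ofReal (Real.exp (-(s * (Gq q t - Gq q y)))) := by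
      rw [zero_add]

lemma dq_lower {q : ℝ → ℝ} (hq : ∀ x, 0 ≤ q x) (hqloc : LocallyIntegrable q volume)
    (hqint : ∫⁻ x : ℝ, ENNReal.ofReal (q x) = ⊤) (a b : ℝ) :
    ∃ δ : ℝ, 0 < δ ∧ ∀ x ∈ Set.Icc a b, δ ≤ dq q x := by
  rcases Set.eq_empty_or_nonempty (Set.Icc a b) with he | hne
  · exact ⟨1, one_pos, fun x hx => absurd hx (he ▸ Set.notMem_empty x)⟩
  set U : ℝ → Set ℝ := fun x =>
    {z | Gq q (z + dq q x / 2) - Gq q (z - dq q x / 2) < 2} with hU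
  have hUopen : ∀ x, IsOpen (U x) := by
    intro x
    exact isOpen_Iio.preimage (((Gq_cont hqloc).comp (continuous_id.add continuous_const)).sub
      ((Gq_cont hqloc).comp (continuous_id.sub continuous_const)))
  have hUmem : ∀ x, x ∈ U x := by
    intro x
    have hpos := dq_pos hq hqloc hqint x
    simp only [hU, Set.mem_setOf_eq]
    by_contra h
    push_neg at h
    have := (dq_spec hq hqloc hqint x).2.2 (dq q x / 2) (by linarith) h
    linarith
  have hUkey : ∀ x z, z ∈ U x → dq q x / 2 < dq q z := by
    intro x z hz
    by_contra h
    push_neg at h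
    exact absurd (mass2 hq hqloc hqint z (dq q x / 2) h) (not_le.mpr hz)
  obtain ⟨t, ht⟩ := (isCompact_Icc (a := a) (b := b)).elim_nhds_subcover U
    (fun x _ => (hUopen x).mem_nhds (hUmem x))
  have htne : t.Nonempty := by
    obtain ⟨x0, hx0⟩ := hne
    obtain ⟨x, hxt, _⟩ := Set.mem_iUnion₂.1 (ht.2 hx0)
    exact ⟨x, hxt⟩
  refine ⟨t.inf' htne (fun x => dq q x / 2), ?_, ?_⟩
  · rw [Finset.lt_inf'_iff]
    exact fun x _ => by linarith [dq_pos hq hqloc hqint x]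
  · intro z hz
    obtain ⟨x, hxt, hzU⟩ := Set.mem_iUnion₂.1 (ht.2 hz)
    exact le_trans (Finset.inf'_le _ hxt) (le_of_lt (hUkey x z hzU))

theorem stmt15 (q : ℝ → ℝ) (hq : ∀ x, 0 ≤ q x)
    (hqloc : LocallyIntegrable q volume)
    (hqint : ∫⁻ x : ℝ, ENNReal.ofReal (q x) = ⊤)
    (hd0 : BddAbove (Set.range (dq q)))
    (α β x₁ : ℝ) (hα : 1 ≤ α) (hβ : 0 < β) (hx₁ : 0 < x₁)
    (hreg : ∀ x : ℝ, x₁ ≤ |x| → ∀ t : ℝ, |t - x| ≤ β →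
      1 / α ≤ dq q t / dq q x ∧ dq q t / dq q x ≤ α)
    (s : ℝ) (hs : 0 < s) :
    ∃ c : ℝ, 0 < c ∧ ∀ x : ℝ,
      (∫⁻ t in Set.Ioi x, ENNReal.ofReal (Real.exp (-(s * ∫ ξ in x..t, q ξ)))) ≤
        ENNReal.ofReal (c * dq q x) := by
  have hL : ∀ x : ℝ, (∫⁻ t in Set.Ioi x, ENNReal.ofReal (Real.exp (-(s * ∫ ξ in x..t, q ξ)))) =
      ∫⁻ t in Set.Ioi x, ENNReal.ofReal (Real.exp (-(s * (Gq q t - Gq q x)))) := by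
    intro x
    exact lintegral_congr fun t => by rw [integral_eq_Gq hqloc]
  have hα0 : (0:ℝ) < α := lt_of_lt_of_le one_pos hα
  set e := Real.exp (-(2 * s)) with he
  have he0 : 0 < e := Real.exp_pos _
  have he1 : e < 1 := by rw [he, Real.exp_lt_one_iff]; linarith
  have h1e : (0:ℝ) < 1 - e := by linarith
  set d₀ := sSup (Set.range (dq q)) with hd₀def
  have hd₀ : ∀ y, dq q y ≤ d₀ := fun y => le_csSup hd0 (Set.mem_range_self y)
  have hd₀pos : 0 < d₀ := lt_of_lt_of_le (dq_pos hq hqloc hqint 0) (hd₀ 0)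
  obtain ⟨δ, hδpos, hδ⟩ := dq_lower hq hqloc hqint (-x₁) x₁
  set A := 2 * d₀ * (1 - e)⁻¹ with hA
  have hApos : 0 < A := by positivity
  set c₂ := 2 * α * (1 - e)⁻¹ + Real.exp (2 * s) * α * A / (s * β) with hc₂
  have hc₂pos : 0 < c₂ := by positivity
  have hEinv : (1 - ENNReal.ofReal e)⁻¹ = ENNReal.ofReal ((1 - e)⁻¹) := by
    rw [← ENNReal.ofReal_one, ← ENNReal.ofReal_sub 1 he0.le, ENNReal.ofReal_inv_of_pos h1e]
  have hglob : ∀ z : ℝ, ∫⁻ t in Set.Ioi z, ENNReal.ofReal (Real.exp (-(s * (Gq q t - Gq q z))))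
      ≤ ENNReal.ofReal A := by
    intro z
    calc ∫⁻ t in Set.Ioi z, ENNReal.ofReal (Real.exp (-(s * (Gq q t - Gq q z))))
        ≤ ENNReal.ofReal (2 * d₀) * (1 - ENNReal.ofReal e)⁻¹ :=
          Jglobal hq hqloc hqint s hs d₀ hd₀pos hd₀ z
      _ = ENNReal.ofReal A := by
          rw [hEinv, ← ENNReal.ofReal_mul (by positivity)]
  refine ⟨max (A / δ) c₂, lt_max_iff.2 (Or.inl (by positivity)), ?_⟩
  intro x
  rw [hL x]
  have hdxpos := dq_pos hq hqloc hqint x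
  rcases lt_or_ge |x| x₁ with hx | hx
  · -- central region
    have hxI : x ∈ Set.Icc (-x₁) x₁ := abs_le.1 hx.le
    have hdx : δ ≤ dq q x := hδ x hxI
    refine (hglob x).trans (ENNReal.ofReal_le_ofReal ?_)
    calc A = (A / δ) * δ := (div_mul_cancel₀ A (ne_of_gt hδpos)).symm
      _ ≤ (A / δ) * dq q x := mul_le_mul_of_nonneg_left hdx (by positivity)
      _ ≤ max (A / δ) c₂ * dq q x :=
          mul_le_mul_of_nonneg_right (le_max_left _ _) hdxpos.le
  · -- outer region
    set r := α * dq q x with hr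
    have hrpos : 0 < r := by positivity
    set K := ⌊β / (2 * r)⌋₊ with hK
    have hKle : (K : ℝ) * (2 * r) ≤ β := by
      have h := Nat.floor_le (show (0:ℝ) ≤ β / (2 * r) by positivity)
      rw [le_div_iff₀ (by positivity)] at h
      exact h
    have hcent : ∀ k : ℕ, k < K → dq q (x + (2 * k + 1) * r) ≤ r := by
      intro k hk
      have hk' : (k : ℝ) + 1 ≤ K := by exact_mod_cast hk
      have hdist : |x + (2 * k + 1) * r - x| ≤ β := by
        rw [add_sub_cancel_left, abs_of_nonneg (by positivity)]
        nlinarith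
      have hre := (hreg x hx _ hdist).2
      rw [div_le_iff₀ hdxpos] at hre
      exact hre
    have hstep := Jstep hq hqloc hqint s hs x r hrpos K hcent
    have hKgt : β / (2 * r) < (K : ℝ) + 1 := Nat.lt_floor_add_one _
    have hpow : e ^ K * A ≤ Real.exp (2 * s) * (r / (s * β)) * A := by
      have hv : 0 < s * β / r := by positivity
      have hexpv : s * β / r ≤ Real.exp (s * β / r) := by
        have := Real.add_one_le_exp (s * β / r); linarith
      have h2 : Real.exp (-(s * β / r)) ≤ r / (s * β) := by
        rw [Real.exp_neg, ← inv_div (s * β) r]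
        exact inv_anti₀ hv hexpv
      have hβr : β < ((K : ℝ) + 1) * (2 * r) := by
        rw [div_lt_iff₀ (by positivity)] at hKgt
        exact hKgt
      have hKr : s * β / r ≤ 2 * s * ((K : ℝ) + 1) := by
        rw [div_le_iff₀ hrpos]
        nlinarith
      have heK : e ^ K ≤ Real.exp (2 * s) * Real.exp (-(s * β / r)) := by
        rw [he, ← Real.exp_nat_mul, ← Real.exp_add]
        apply Real.exp_le_exp.2
        linarith
      have h3 : Real.exp (2 * s) * Real.exp (-(s * β / r)) ≤
          Real.exp (2 * s) * (r / (s * β)) :=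
        mul_le_mul_of_nonneg_left h2 (Real.exp_nonneg _)
      nlinarith [Real.exp_nonneg (-(s * β / r)), pow_nonneg he0.le K]
    have hfin : 2 * r * (1 - e)⁻¹ + e ^ K * A ≤ c₂ * dq q x := by
      have hexp : Real.exp (2 * s) * (r / (s * β)) * A =
          Real.exp (2 * s) * α * A / (s * β) * dq q x := by
        rw [hr]; ring
      rw [hc₂, hr]
      nlinarith [hpow, hexp]
    calc ∫⁻ t in Set.Ioi x, ENNReal.ofReal (Real.exp (-(s * (Gq q t - Gq q x))))
        ≤ ENNReal.ofReal (2 * r) * (1 - ENNReal.ofReal e)⁻¹ +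
          ENNReal.ofReal e ^ K * ∫⁻ t in Set.Ioi (x + 2 * K * r),
            ENNReal.ofReal (Real.exp (-(s * (Gq q t - Gq q (x + 2 * K * r))))) := hstep
      _ ≤ ENNReal.ofReal (2 * r) * ENNReal.ofReal ((1 - e)⁻¹) +
          ENNReal.ofReal e ^ K * ENNReal.ofReal A := by
          rw [hEinv]
          gcongr
          exact hglob _
      _ = ENNReal.ofReal (2 * r * (1 - e)⁻¹ + e ^ K * A) := by
          rw [← ENNReal.ofReal_mul (by positivity), ← ENNReal.ofReal_pow he0.le,
            ← ENNReal.ofReal_mul (pow_nonneg he0.le K),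
            ← ENNReal.ofReal_add (by positivity) (by positivity)]
      _ ≤ ENNReal.ofReal (c₂ * dq q x) := ENNReal.ofReal_le_ofReal hfin
      _ ≤ ENNReal.ofReal (max (A / δ) c₂ * dq q x) :=
          ENNReal.ofReal_le_ofReal
            (mul_le_mul_of_nonneg_right (le_max_right _ _) hdxpos.le)
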